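/- Separated factorization of the single-path CSI ratio (equation (25) of the paper): assume α₁ ≠ 0. For all antennas n, n−q, packets m, and subcarriers g with y_{n−q}[m,g] ≠ 0, one has y_n[m,g]/y_{n−q}[m,g] = e^{i q φ₁} · (S'_n[g] + D'[m]) / (S'_{n−q}[g] + D'[m]), where D'[m] = e^{i 2π m T_A f_{D,1}} depends only on m and S'_k[g] = S_k[g] · e^{−i k φ₁} · e^{i 2π (g/T) τ} / α₁ depends only on k and g; in particular, the packet index m and the subcarrier index g are separated in the CSI ratio. -/

import Mathlib

/-- Offset-free received sample for a single dynamic path with dynamic delay `τ`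
and static components `S`:
`y_n[m,g] = S_n[g] + α₁ e^{i n φ₁} e^{i 2π m T_A f_{D,1}} e^{−i 2π (g/T) τ}`. -/
noncomputable def ysp (T TA : ℝ) (α₁ : ℂ) (φ₁ fD τ : ℝ) (S : ℤ → ℕ → ℂ)
    (n : ℤ) (m g : ℕ) : ℂ :=
  S n g + α₁ * Complex.exp (Complex.I * n * φ₁) *
    Complex.exp (Complex.I * 2 * Real.pi * m * TA * fD) *
    Complex.exp (-Complex.I * 2 * Real.pi * (g / T) * τ)

/-- Doppler factor `D'[m] = e^{i 2π m T_A f_{D,1}}`, depending only on the packet index. -/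
noncomputable def Dprime (TA fD : ℝ) (m : ℕ) : ℂ :=
  Complex.exp (Complex.I * 2 * Real.pi * m * TA * fD)

/-- Normalized static component
`S'_k[g] = S_k[g] e^{−i k φ₁} e^{i 2π (g/T) τ} / α₁`, depending only on the antenna
index `k` and the subcarrier index `g`. -/
noncomputable def Sprime (T : ℝ) (α₁ : ℂ) (φ₁ τ : ℝ) (S : ℤ → ℕ → ℂ)
    (k : ℤ) (g : ℕ) : ℂ :=
  S k g * Complex.exp (-Complex.I * k * φ₁) *
    Complex.exp (Complex.I * 2 * Real.pi * (g / T) * τ) / α₁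

/-- Separated factorization of the single-path CSI ratio (equation (25)): for
`α₁ ≠ 0` and `y_{n−q}[m,g] ≠ 0`,
`y_n[m,g]/y_{n−q}[m,g] = e^{i q φ₁} (S'_n[g] + D'[m])/(S'_{n−q}[g] + D'[m])`,
so the packet index `m` and the subcarrier index `g` are separated. -/
theorem csi_ratio_separated_factorization
    (T TA : ℝ) (hT : 0 < T) (hTA : 0 < TA)
    (α₁ : ℂ) (hα : α₁ ≠ 0) (φ₁ fD τ : ℝ) (S : ℤ → ℕ → ℂ)
    (n q : ℤ) (m g : ℕ)
    (hy : ysp T TA α₁ φ₁ fD τ S (n - q) m g ≠ 0) :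
    ysp T TA α₁ φ₁ fD τ S n m g / ysp T TA α₁ φ₁ fD τ S (n - q) m g =
      Complex.exp (Complex.I * q * φ₁) *
        ((Sprime T α₁ φ₁ τ S n g + Dprime TA fD m) /
          (Sprime T α₁ φ₁ τ S (n - q) g + Dprime TA fD m)) := by
  have key : ∀ k : ℤ, ysp T TA α₁ φ₁ fD τ S k m g =
      α₁ * Complex.exp (Complex.I * k * φ₁) *
        Complex.exp (-Complex.I * 2 * Real.pi * (g / T) * τ) *
        (Sprime T α₁ φ₁ τ S k g + Dprime TA fD m) := by
    intro k
    have h1 : Complex.exp (Complex.I * k * φ₁) * Complex.exp (-Complex.I * k * φ₁) = 1 := by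
      rw [← Complex.exp_add]; ring_nf; exact Complex.exp_zero
    have h2 : Complex.exp (-Complex.I * 2 * Real.pi * (g / T) * τ) *
        Complex.exp (Complex.I * 2 * Real.pi * (g / T) * τ) = 1 := by
      rw [← Complex.exp_add]; ring_nf; exact Complex.exp_zero
    simp only [ysp, Sprime, Dprime]
    rw [show -Complex.I * k * φ₁ = -(Complex.I * k * φ₁) by ring,
      show Complex.I * 2 * Real.pi * (g / T) * τ =
        -(-Complex.I * 2 * Real.pi * (g / T) * τ) by ring,
      Complex.exp_neg, Complex.exp_neg]
    field_simp
  have hden : Sprime T α₁ φ₁ τ S (n - q) g + Dprime TA fD m ≠ 0 := by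
    intro h0
    apply hy
    rw [key (n - q), h0, mul_zero]
  rw [key n, key (n - q)]
  have hE : Complex.exp (Complex.I * n * φ₁) =
      Complex.exp (Complex.I * q * φ₁) * Complex.exp (Complex.I * (n - q) * φ₁) := by
    rw [← Complex.exp_add]; ring_nf
  rw [hE]
  field_simp
  push_cast
  ring_nf
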